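/- For all integers n ≥ 0 and m ≥ 0: Σ_{k=m}^{n} C(n,k) s(k,m)/k! = H_n(m)/m!. -/

import Mathlib

open Finset

/-- Multiple harmonic-like numbers `H_n(m)`: the sum of `1/(k_1 ⋯ k_m)` over all
`m`-tuples of positive integers with `k_1 + ⋯ + k_m ≤ n`. -/
def Hml (n m : ℕ) : ℚ :=
  ∑ k ∈ (Fintype.piFinset fun _ : Fin m => Finset.Icc 1 n).filter
      (fun k => ∑ i, k i ≤ n),
    ∏ i, (1 : ℚ) / (k i : ℚ)

/-- The `n`-th harmonic number. -/
def harm (n : ℕ) : ℚ := ∑ j ∈ Finset.Icc 1 n, (1 : ℚ) / (j : ℚ)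

/-- The `n`-th second-order harmonic number. -/
def harm2 (n : ℕ) : ℚ := ∑ j ∈ Finset.Icc 1 n, (1 : ℚ) / (j : ℚ) ^ 2

/-- The `n`-th odd harmonic number. -/
def oddharm (n : ℕ) : ℚ := ∑ k ∈ Finset.Icc 1 n, (1 : ℚ) / (2 * (k : ℚ) - 1)

/-- Signed Stirling numbers of the first kind. -/
def stirlingFirst : ℕ → ℕ → ℤ
  | 0, 0 => 1
  | 0, _ + 1 => 0
  | _ + 1, 0 => 0
  | n + 1, k + 1 => stirlingFirst n k - n * stirlingFirst n (k + 1)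

/-- Generalized binomial coefficient `C(r, k) = r(r−1)⋯(r−k+1)/k!`. -/
noncomputable def gchoose (r : ℂ) (k : ℕ) : ℂ :=
  (∏ i ∈ Finset.range k, (r - i)) / (k.factorial : ℂ)

lemma stirling_zero (n : ℕ) : stirlingFirst (n+1) 0 = 0 := rfl

lemma stirling_eq_zero_of_lt : ∀ n m : ℕ, n < m → stirlingFirst n m = 0
  | 0, m+1, _ => rfl
  | n+1, m+1, h => by
      rw [show stirlingFirst (n+1) (m+1) = stirlingFirst n m - n * stirlingFirst n (m+1) from rfl,
        stirling_eq_zero_of_lt n m (by omega), stirling_eq_zero_of_lt n (m+1) (by omega)]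
      ring

/-- Key tail-shifted identity, proved by downward induction on `t`. -/
lemma Qlem (n m : ℕ) : ∀ d t : ℕ, n + 1 ≤ t + d →
    ∑ j ∈ range (n+2), (n.choose (j+t) : ℚ) * (stirlingFirst j m : ℚ) / (j.factorial : ℚ)
      = ∑ j ∈ range (n+2), ((n+1).choose (j+t) : ℚ) * j * (stirlingFirst j (m+1) : ℚ)
          / (j.factorial : ℚ) := by
  intro d
  induction d with
  | zero =>
    intro t ht
    rw [sum_eq_zero, sum_eq_zero]
    · intro j hj
      rcases Nat.eq_zero_or_pos j with rfl | hjpos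
      · simp
      · rw [Nat.choose_eq_zero_of_lt (by omega)]; simp
    · intro j hj
      rw [Nat.choose_eq_zero_of_lt (by omega)]; simp
  | succ d ih =>
    intro t ht
    rcases le_or_gt (n+1) t with h | h
    · -- same as base case
      rw [sum_eq_zero, sum_eq_zero]
      · intro j hj
        rcases Nat.eq_zero_or_pos j with rfl | hjpos
        · simp
        · rw [Nat.choose_eq_zero_of_lt (by omega)]; simp
      · intro j hj
        rw [Nat.choose_eq_zero_of_lt (by omega)]; simp
    · -- use ih at t+1
      have IH := ih (t+1) (by omega)
      -- RHS: peel off j=0 and reindex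
      have hre : ∑ j ∈ range (n+2), ((n+1).choose (j+t) : ℚ) * j * (stirlingFirst j (m+1) : ℚ)
          / (j.factorial : ℚ)
          = ∑ i ∈ range (n+1), ((n+1).choose (i+1+t) : ℚ) * (stirlingFirst (i+1) (m+1) : ℚ)
            / (i.factorial : ℚ) := by
        rw [sum_range_succ' (fun j => ((n+1).choose (j+t) : ℚ) * j * (stirlingFirst j (m+1) : ℚ)
          / (j.factorial : ℚ)) (n+1)]
        simp only [Nat.cast_zero, mul_zero, zero_mul, zero_div, add_zero]
        apply sum_congr rfl
        intro i _
        have : ((i+1).factorial : ℚ) = (i+1) * (i.factorial : ℚ) := by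
          push_cast [Nat.factorial_succ]; ring
        rw [this]
        push_cast
        have hfac : (i.factorial : ℚ) ≠ 0 := by positivity
        field_simp
      -- rewrite stirling recurrence and Pascal
      have hst : ∀ i : ℕ, (stirlingFirst (i+1) (m+1) : ℚ)
          = (stirlingFirst i m : ℚ) - i * (stirlingFirst i (m+1) : ℚ) := by
        intro i
        rw [show stirlingFirst (i+1) (m+1) = stirlingFirst i m - i * stirlingFirst i (m+1) from rfl]
        push_cast; ring
      have hpas : ∀ i : ℕ, (((n+1).choose (i+1+t)) : ℚ)
          = (n.choose (i+t) : ℚ) + (n.choose (i+t+1) : ℚ) := by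
        intro i
        rw [show i+1+t = (i+t)+1 by ring, Nat.choose_succ_succ]
        push_cast; ring
      rw [hre]
      refine Eq.symm ?_
      calc ∑ i ∈ range (n+1), ((n+1).choose (i+1+t) : ℚ) * (stirlingFirst (i+1) (m+1) : ℚ)
            / (i.factorial : ℚ)
          = ∑ i ∈ range (n+1), ((n.choose (i+t) : ℚ) * (stirlingFirst i m : ℚ) / (i.factorial : ℚ)
              + ((n.choose (i+(t+1)) : ℚ) * (stirlingFirst i m : ℚ) / (i.factorial : ℚ)
                - ((n+1).choose (i+(t+1)) : ℚ) * i * (stirlingFirst i (m+1) : ℚ)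
                  / (i.factorial : ℚ))) := by
            apply sum_congr rfl
            intro i _
            rw [hst i, hpas i, show i+(t+1) = i+1+t by ring, hpas i,
              show i+1+t = i+(t+1) by ring]
            ring
        _ = ∑ j ∈ range (n+2), (n.choose (j+t) : ℚ) * (stirlingFirst j m : ℚ) / (j.factorial : ℚ) := by
            rw [sum_add_distrib]
            have h1 : ∑ i ∈ range (n+1), ((n.choose (i+(t+1)) : ℚ) * (stirlingFirst i m : ℚ)
                / (i.factorial : ℚ)
                - ((n+1).choose (i+(t+1)) : ℚ) * i * (stirlingFirst i (m+1) : ℚ)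
                  / (i.factorial : ℚ)) = 0 := by
              rw [sum_sub_distrib]
              have e1 : ∑ i ∈ range (n+2), (n.choose (i+(t+1)) : ℚ) * (stirlingFirst i m : ℚ)
                  / (i.factorial : ℚ)
                  = ∑ i ∈ range (n+1), (n.choose (i+(t+1)) : ℚ) * (stirlingFirst i m : ℚ)
                  / (i.factorial : ℚ) := by
                rw [sum_range_succ, Nat.choose_eq_zero_of_lt (by omega)]
                simp
              have e2 : ∑ i ∈ range (n+2), ((n+1).choose (i+(t+1)) : ℚ) * i
                  * (stirlingFirst i (m+1) : ℚ) / (i.factorial : ℚ)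
                  = ∑ i ∈ range (n+1), ((n+1).choose (i+(t+1)) : ℚ) * i
                  * (stirlingFirst i (m+1) : ℚ) / (i.factorial : ℚ) := by
                rw [sum_range_succ, Nat.choose_eq_zero_of_lt (by omega)]
                simp
              rw [← e1, ← e2, ← IH, sub_self]
            rw [h1, add_zero, sum_range_succ _ (n+1), Nat.choose_eq_zero_of_lt (by omega)]
            simp

lemma Hml_zero_right (n : ℕ) : Hml n 0 = 1 := by
  simp [Hml]

lemma Hml_zero_left (m : ℕ) : Hml 0 (m+1) = 0 := by
  simp [Hml]

lemma Hml_big (n m M : ℕ) (h : n ≤ M) :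
    Hml n m = ∑ k ∈ (Fintype.piFinset fun _ : Fin m => Finset.Icc 1 M).filter
      (fun k => ∑ i, k i ≤ n), ∏ i, (1 : ℚ) / (k i : ℚ) := by
  unfold Hml
  congr 1
  ext k
  simp only [mem_filter, Fintype.mem_piFinset, Finset.mem_Icc]
  constructor
  · rintro ⟨h1, h2⟩
    exact ⟨fun a => ⟨(h1 a).1, le_trans (h1 a).2 h⟩, h2⟩
  · rintro ⟨h1, h2⟩
    refine ⟨fun a => ⟨(h1 a).1, ?_⟩, h2⟩
    calc k a ≤ ∑ i, k i := Finset.single_le_sum (fun i _ => Nat.zero_le _) (mem_univ a)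
      _ ≤ n := h2

lemma slice_sum (n m : ℕ) (i : Fin (m+1)) :
    ∑ k ∈ (Fintype.piFinset fun _ : Fin (m+1) => Finset.Icc 1 (n+1)).filter
      (fun k => ∑ i, k i = n+1),
      ∏ j : Fin m, (1 : ℚ) / (k (i.succAbove j) : ℚ) = Hml n m := by
  rw [Hml]
  refine Finset.sum_nbij' (fun k j => k (i.succAbove j))
    (fun g => i.insertNth (n + 1 - ∑ j, g j) g) ?_ ?_ ?_ ?_ ?_
  · intro k hk
    simp only [mem_filter, Fintype.mem_piFinset, Finset.mem_Icc] at hk ⊢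
    obtain ⟨h1, h2⟩ := hk
    have key : k i + ∑ j : Fin m, k (i.succAbove j) = n + 1 := by
      rw [← Fin.sum_univ_succAbove k i]; exact h2
    have hki : 1 ≤ k i := (h1 i).1
    have hsum : ∑ j : Fin m, k (i.succAbove j) ≤ n := by omega
    refine ⟨fun j => ⟨(h1 _).1, ?_⟩, hsum⟩
    calc k (i.succAbove j) ≤ ∑ j' : Fin m, k (i.succAbove j') :=
          Finset.single_le_sum (f := fun j' => k (i.succAbove j')) (fun _ _ => Nat.zero_le _)
            (mem_univ j)
      _ ≤ n := hsum
  · intro g hg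
    simp only [mem_filter, Fintype.mem_piFinset, Finset.mem_Icc] at hg ⊢
    obtain ⟨h1, h2⟩ := hg
    have hsum : ∑ l, i.insertNth (n + 1 - ∑ j, g j) g l = n + 1 := by
      rw [Fin.sum_univ_succAbove _ i]
      simp only [Fin.insertNth_apply_same, Fin.insertNth_apply_succAbove]
      omega
    refine ⟨fun l => ?_, hsum⟩
    rcases eq_or_ne l i with rfl | hne
    · rw [Fin.insertNth_apply_same]; omega
    · obtain ⟨j, rfl⟩ := Fin.exists_succAbove_eq hne
      simp only [Fin.insertNth_apply_succAbove]
      exact ⟨(h1 j).1, le_trans (h1 j).2 (Nat.le_succ n)⟩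
  · intro k hk
    simp only [mem_filter, Fintype.mem_piFinset, Finset.mem_Icc] at hk
    obtain ⟨h1, h2⟩ := hk
    have key : k i + ∑ j : Fin m, k (i.succAbove j) = n + 1 := by
      rw [← Fin.sum_univ_succAbove k i]; exact h2
    have hv : n + 1 - ∑ j : Fin m, k (i.succAbove j) = k i := by omega
    funext l
    rcases eq_or_ne l i with rfl | hne
    · simp only [Fin.insertNth_apply_same]
      omega
    · obtain ⟨j, rfl⟩ := Fin.exists_succAbove_eq hne
      simp only [Fin.insertNth_apply_succAbove]
  · intro g hg
    funext j
    simp only [Fin.insertNth_apply_succAbove]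
  · intro k hk
    rfl

lemma Hml_rec (n m : ℕ) :
    ((n:ℚ)+1) * Hml (n+1) (m+1) = ((n:ℚ)+1) * Hml n (m+1) + ((m:ℚ)+1) * Hml n m := by
  classical
  set S := Fintype.piFinset fun _ : Fin (m+1) => Finset.Icc 1 (n+1) with hS
  have hsplit : Hml (n+1) (m+1)
      = Hml n (m+1) + ∑ k ∈ S.filter (fun k => ∑ i, k i = n+1), ∏ i, (1:ℚ)/(k i : ℚ) := by
    have h0 := Finset.sum_filter_add_sum_filter_not (S.filter (fun k => ∑ i, k i ≤ n+1))
      (fun k => ∑ i, k i ≤ n) (fun k => ∏ i, (1:ℚ)/(k i : ℚ))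
    rw [filter_filter, filter_filter] at h0
    have e1 : S.filter (fun a => (∑ i, a i ≤ n+1) ∧ ∑ i, a i ≤ n)
        = S.filter (fun k => ∑ i, k i ≤ n) := by
      apply filter_congr; intro k _
      constructor
      · exact fun h => h.2
      · exact fun h => ⟨by omega, h⟩
    have e2 : S.filter (fun a => (∑ i, a i ≤ n+1) ∧ ¬ ∑ i, a i ≤ n)
        = S.filter (fun k => ∑ i, k i = n+1) := by
      apply filter_congr; intro k _
      constructor
      · intro h; omega
      · intro h; omega
    rw [e1, e2] at h0
    rw [show Hml (n+1) (m+1) = ∑ k ∈ S.filter (fun k => ∑ i, k i ≤ n+1),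
      ∏ i, (1:ℚ)/(k i : ℚ) from rfl, ← h0,
      Hml_big n (m+1) (n+1) (Nat.le_succ n)]
  have key : ((n:ℚ)+1) * ∑ k ∈ S.filter (fun k => ∑ i, k i = n+1), ∏ i, (1:ℚ)/(k i : ℚ)
      = ((m:ℚ)+1) * Hml n m := by
    rw [Finset.mul_sum]
    have step : ∀ k ∈ S.filter (fun k => ∑ i, k i = n+1),
        ((n:ℚ)+1) * ∏ i, (1:ℚ)/(k i : ℚ)
          = ∑ i : Fin (m+1), ∏ j : Fin m, (1:ℚ)/(k (i.succAbove j) : ℚ) := by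
      intro k hk
      simp only [hS, mem_filter, Fintype.mem_piFinset, Finset.mem_Icc] at hk
      obtain ⟨h1, h2⟩ := hk
      have hcast : ((n:ℚ)+1) = ∑ i : Fin (m+1), (k i : ℚ) := by
        have h3 : ((∑ i, k i : ℕ) : ℚ) = ((n:ℚ)+1) := by rw [h2]; push_cast; ring
        rw [← h3, Nat.cast_sum]
      rw [hcast, Finset.sum_mul]
      apply Finset.sum_congr rfl
      intro i _
      rw [Fin.prod_univ_succAbove (fun l => (1:ℚ)/(k l : ℚ)) i]
      have hne : (k i : ℚ) ≠ 0 := Nat.cast_ne_zero.mpr (by have := (h1 i).1; omega)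
      field_simp
    rw [Finset.sum_congr rfl step, Finset.sum_comm,
      Finset.sum_congr rfl (fun i _ => slice_sum n m i), Finset.sum_const, card_univ]
    simp only [Fintype.card_fin, nsmul_eq_mul]
    push_cast; ring
  rw [hsplit, mul_add, key]

/-- `A n m`, the LHS written over `range (n+1)`. -/
def Aml (n m : ℕ) : ℚ :=
  ∑ k ∈ range (n+1), (n.choose k : ℚ) * (stirlingFirst k m : ℚ) / (k.factorial : ℚ)

lemma sum_Icc_eq_Aml (n m : ℕ) :
    ∑ k ∈ Finset.Icc m n, (n.choose k : ℚ) * (stirlingFirst k m : ℚ) / (k.factorial : ℚ)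
      = Aml n m := by
  apply Finset.sum_subset
  · intro x hx
    simp only [mem_Icc] at hx
    simp only [mem_range]
    omega
  · intro x hx hnx
    simp only [mem_range] at hx
    simp only [mem_Icc] at hnx
    rw [stirling_eq_zero_of_lt x m (by omega)]
    simp

lemma choose_idQ (n j : ℕ) :
    ((n:ℚ)+1) * (((n+1).choose j : ℕ) : ℚ)
      = ((n:ℚ)+1) * ((n.choose j : ℕ) : ℚ) + (j:ℚ) * (((n+1).choose j : ℕ) : ℚ) := by
  cases j with
  | zero => simp
  | succ s =>
    have hq : ((n:ℚ)+1) * ((n.choose s : ℕ) : ℚ)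
        = (((n+1).choose (s+1) : ℕ) : ℚ) * ((s:ℚ)+1) := by
      have h := Nat.add_one_mul_choose_eq n s
      have := congrArg (Nat.cast : ℕ → ℚ) h
      push_cast at this
      linarith
    have hpq : (((n+1).choose (s+1) : ℕ) : ℚ)
        = ((n.choose s : ℕ) : ℚ) + ((n.choose (s+1) : ℕ) : ℚ) := by
      have := congrArg (Nat.cast : ℕ → ℚ) (Nat.choose_succ_succ n s)
      push_cast at this
      linarith
    push_cast
    push_cast at hq hpq
    linear_combination hq + ((n:ℚ)+1) * hpq

lemma Aml_rec (n m : ℕ) :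
    ((n:ℚ)+1) * Aml (n+1) (m+1) = ((n:ℚ)+1) * Aml n (m+1) + Aml n m := by
  have Q0 := Qlem n m (n+1) 0 (by omega)
  simp only [Nat.add_zero] at Q0
  have ext1 : Aml n (m+1) = ∑ j ∈ range (n+2), (n.choose j : ℚ) * (stirlingFirst j (m+1) : ℚ)
      / (j.factorial : ℚ) := by
    rw [Aml, sum_range_succ _ (n+1), Nat.choose_eq_zero_of_lt (by omega)]
    simp
  have ext0 : Aml n m = ∑ j ∈ range (n+2), (n.choose j : ℚ) * (stirlingFirst j m : ℚ)
      / (j.factorial : ℚ) := by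
    rw [Aml, sum_range_succ _ (n+1), Nat.choose_eq_zero_of_lt (by omega)]
    simp
  rw [ext1, ext0, Aml, Finset.mul_sum, Finset.mul_sum, Q0, ← Finset.sum_add_distrib]
  apply Finset.sum_congr rfl
  intro j _
  have hc := choose_idQ n j
  linear_combination ((stirlingFirst j (m+1) : ℚ) / (j.factorial : ℚ)) * hc

lemma Aml_zero (n : ℕ) : Aml n 0 = 1 := by
  rw [Aml]
  rw [Finset.sum_eq_single_of_mem 0 (by simp)]
  · simp [stirlingFirst]
  · intro j _ hj
    obtain ⟨j', rfl⟩ := Nat.exists_eq_succ_of_ne_zero hj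
    rw [stirling_zero]
    simp

lemma Aml_eq_Hml (n : ℕ) : ∀ m, Aml n m = Hml n m / (m.factorial : ℚ) := by
  induction n with
  | zero =>
    intro m
    cases m with
    | zero => simp [Aml_zero, Hml_zero_right]
    | succ m' =>
      rw [Hml_zero_left, Aml]
      rw [show (0:ℕ)+1 = 1 from rfl, range_one, sum_singleton,
        stirling_eq_zero_of_lt 0 (m'+1) (by omega)]
      simp
  | succ n ih =>
    intro m
    cases m with
    | zero => simp [Aml_zero, Hml_zero_right]
    | succ m' =>
      have h1 := ih m'
      have h2 := ih (m'+1)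
      have hA := Aml_rec n m'
      have hH := Hml_rec n m'
      have hn : ((n:ℚ)+1) ≠ 0 := by positivity
      have hf1 : ((m'.factorial : ℕ) : ℚ) ≠ 0 := by positivity
      have hf2 : (((m'+1).factorial : ℕ) : ℚ) ≠ 0 := by positivity
      have hfs : (((m'+1).factorial : ℕ) : ℚ) = ((m':ℚ)+1) * (m'.factorial : ℚ) := by
        rw [Nat.factorial_succ]
        push_cast
        ring
      rw [h1, h2] at hA
      apply mul_left_cancel₀ hn
      rw [hA, hfs]
      field_simp
      linear_combination (-1 : ℚ) * hH

theorem stmt_3 (n m : ℕ) :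
    ∑ k ∈ Finset.Icc m n, (n.choose k : ℚ) * (stirlingFirst k m : ℚ) / (k.factorial : ℚ) =
      Hml n m / (m.factorial : ℚ) := by
  rw [sum_Icc_eq_Aml, Aml_eq_Hml]
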